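/- For E > 0 and c ∈ ℝ, the squared L² norm of the bright-soliton profile satisfies ∫_ℝ φ_{E,c}(y)² dy = 8 arctan(√((√(c²+4E)+c)/(√(c²+4E)−c))), and in particular this quantity is at most 4π. -/

import Mathlib

open MeasureTheory
open Real Filter Topology

set_option maxHeartbeats 1000000

set_option maxHeartbeats 1000000 in
lemma bs_aux_deriv (E c : ℝ) (hE : 0 < E)
    (s : ℝ) (hs2 : s^2 = c^2+4*E) (hcs : c < s) (hcs' : -s < c) (hs0 : 0 < s)
    (m : ℝ) (hm0 : 0 < m) (hm2 : m^2 = (s+c)/(s-c)) (hmE : m * Real.sqrt E = (s+c)/2)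
    (hscne : s - c ≠ 0) (y : ℝ) :
    HasDerivAt (fun y => Real.arctan (m * (Real.sinh (Real.sqrt E * y) / Real.cosh (Real.sqrt E * y))))
      (((2 * Real.sqrt (2 * E) / (c ^ 2 + 4 * E) ^ ((1 : ℝ) / 4)) *
          (1 / Real.sqrt (Real.cosh (2 * Real.sqrt E * y) - c / s))) ^ 2 / 4) y := by
  have h0 : HasDerivAt (fun y : ℝ => Real.sqrt E * y) (Real.sqrt E) y := by
    simpa using (hasDerivAt_id y).const_mul (Real.sqrt E)
  have hchpos : 0 < Real.cosh (Real.sqrt E * y) := Real.cosh_pos (Real.sqrt E * y)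
  have hd := (((h0.sinh.div h0.cosh (ne_of_gt hchpos)).const_mul m).arctan)
  simp only [Pi.div_apply] at hd
  convert hd using 1
  set u := Real.sqrt E * y with hu
  set ch := Real.cosh u with hch
  set sh := Real.sinh u with hsh
  have hpy : ch^2 - sh^2 = 1 := Real.cosh_sq_sub_sinh_sq u
  have hsh2 : sh^2 = ch^2 - 1 := by linarith
  have h2u : Real.cosh (2 * Real.sqrt E * y) = ch^2 + sh^2 := by
    rw [mul_assoc, ← hu, Real.cosh_two_mul]
  clear_value sh ch u
  have hD : 0 < Real.cosh (2 * Real.sqrt E * y) - c / s := by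
    have h1 := Real.one_le_cosh (2 * Real.sqrt E * y)
    have h2 : c / s < 1 := (div_lt_one hs0).mpr hcs
    linarith
  have hsq1 : (2 * Real.sqrt (2 * E)) ^ 2 = 8 * E := by
    rw [mul_pow, Real.sq_sqrt (by linarith)]; ring
  have hsq2 : ((c ^ 2 + 4 * E) ^ ((1:ℝ)/4)) ^ 2 = s := by
    rw [← Real.rpow_natCast ((c ^ 2 + 4 * E) ^ ((1:ℝ)/4)) 2, ← Real.rpow_mul (by nlinarith)]
    norm_num
    rw [← Real.sqrt_eq_rpow, show c^2+4*E = s^2 from hs2.symm, Real.sqrt_sq hs0.le]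
  have hsq3 : (1 / Real.sqrt (Real.cosh (2 * Real.sqrt E * y) - c / s)) ^ 2
      = 1 / (Real.cosh (2 * Real.sqrt E * y) - c / s) := by
    rw [div_pow, one_pow, Real.sq_sqrt hD.le]
  have hchne : ch ≠ 0 := ne_of_gt hchpos
  have hLHS : ((2 * Real.sqrt (2 * E) / (c ^ 2 + 4 * E) ^ ((1 : ℝ) / 4)) *
          (1 / Real.sqrt (Real.cosh (2 * Real.sqrt E * y) - c / s))) ^ 2 / 4
      = 2*E/(s*(ch^2+sh^2 - c/s)) := by
    rw [mul_pow, div_pow, hsq1, hsq2, hsq3, h2u]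
    have hDne : ch^2 + sh^2 - c/s ≠ 0 := by rw [h2u] at hD; exact ne_of_gt hD
    rw [div_mul_div_comm, mul_one, div_div,
      div_eq_div_iff (by exact mul_ne_zero (mul_ne_zero (ne_of_gt hs0) hDne) (by norm_num))
        (mul_ne_zero (ne_of_gt hs0) hDne)]
    ring
  rw [hLHS]
  have hP : 0 < 2*s*ch^2 - s - c := by
    rw [h2u] at hD
    have h3 : s * (c/s) = c := by field_simp
    nlinarith [mul_pos hs0 hD]
  have hL : s*(ch^2+sh^2 - c/s) = 2*s*ch^2 - s - c := by
    have h3 : s * (c/s) = c := by field_simp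
    nlinarith [h3]
  have hPden : ch^2 + m^2*sh^2 = (2*s*ch^2 - s - c)/(s-c) := by
    rw [hsh2, hm2]; field_simp; ring
  have hPne : (2*s*ch^2 - s - c) ≠ 0 := ne_of_gt hP
  have hQpos : 0 < ch^2 + m^2*sh^2 := by rw [hPden]; exact div_pos hP (show (0:ℝ) < s - c by linarith)
  calc 2*E/(s*(ch^2+sh^2 - c/s)) = 2*E/(2*s*ch^2 - s - c) := by rw [hL]
    _ = m*Real.sqrt E/(ch^2+m^2*sh^2) := by
        rw [hPden, hmE]
        rw [div_div_eq_mul_div, div_mul_eq_mul_div, div_div]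
        rw [div_eq_div_iff hPne (by positivity)]
        linear_combination (-(2*s*ch^2 - s - c))*hs2
    _ = 1 / (1 + (m * (sh / ch)) ^ 2) * (m * ((ch * Real.sqrt E * ch - sh * (sh * Real.sqrt E)) / ch ^ 2)) := by
        rw [show ch * Real.sqrt E * ch - sh * (sh * Real.sqrt E) = Real.sqrt E * (ch^2 - sh^2) by ring,
          hpy, mul_one]
        have hQne : ch^2 + m^2*sh^2 ≠ 0 := ne_of_gt hQpos
        have h1 : 1 + (m * (sh / ch)) ^ 2 = (ch^2 + m^2*sh^2)/ch^2 := by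
          field_simp
        rw [h1, one_div_div]
        rw [div_mul_eq_mul_div, div_eq_div_iff hQne (by positivity)]
        field_simp


lemma bs_tanh_eq (u : ℝ) : Real.sinh u / Real.cosh u = 1 - 2/(Real.exp (2*u)+1) := by
  have h1 : Real.exp u ≠ 0 := (Real.exp_pos u).ne'
  have h2 : Real.exp (2*u) = Real.exp u * Real.exp u := by rw [two_mul, Real.exp_add]
  rw [Real.sinh_eq, Real.cosh_eq, h2, Real.exp_neg]
  have h4 : Real.exp u * Real.exp u + 1 ≠ 0 := by positivity
  have h5 : Real.exp u + (Real.exp u)⁻¹ ≠ 0 := by positivity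
  field_simp
  ring

lemma bs_tanh_top (E : ℝ) (hE : 0 < E) :
    Tendsto (fun y => Real.sinh (Real.sqrt E * y) / Real.cosh (Real.sqrt E * y)) atTop (𝓝 1) := by
  have hE0 : 0 < Real.sqrt E := Real.sqrt_pos.mpr hE
  have h5 : Tendsto (fun y : ℝ => 2*(Real.sqrt E*y)) atTop atTop :=
    (tendsto_id.const_mul_atTop hE0).const_mul_atTop two_pos
  have htop' : Tendsto (fun y : ℝ => Real.exp (2*(Real.sqrt E*y))) atTop atTop :=
    Real.tendsto_exp_atTop.comp h5
  have hden : Tendsto (fun y : ℝ => Real.exp (2*(Real.sqrt E*y)) + 1) atTop atTop :=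
    tendsto_atTop_add_const_right _ 1 htop'
  have hz : Tendsto (fun y : ℝ => 2/(Real.exp (2*(Real.sqrt E*y))+1)) atTop (𝓝 0) :=
    (tendsto_const_nhds (x := (2:ℝ))).div_atTop hden
  have := (tendsto_const_nhds (x := (1:ℝ))).sub hz
  rw [sub_zero] at this
  exact this.congr (fun y => (bs_tanh_eq (Real.sqrt E * y)).symm)

lemma bs_tanh_bot (E : ℝ) (hE : 0 < E) :
    Tendsto (fun y => Real.sinh (Real.sqrt E * y) / Real.cosh (Real.sqrt E * y)) atBot (𝓝 (-1)) := by
  have hE0 : 0 < Real.sqrt E := Real.sqrt_pos.mpr hE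
  have h5 : Tendsto (fun y : ℝ => 2*(Real.sqrt E*y)) atBot atBot :=
    (tendsto_id.const_mul_atBot hE0).const_mul_atBot two_pos
  have hexp0 : Tendsto (fun y : ℝ => Real.exp (2*(Real.sqrt E*y))) atBot (𝓝 0) :=
    Real.tendsto_exp_atBot.comp h5
  have hden : Tendsto (fun y : ℝ => Real.exp (2*(Real.sqrt E*y)) + 1) atBot (𝓝 (0+1)) :=
    hexp0.add tendsto_const_nhds
  have hfrac : Tendsto (fun y : ℝ => 2/(Real.exp (2*(Real.sqrt E*y))+1)) atBot (𝓝 (2/(0+1))) :=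
    tendsto_const_nhds.div hden (by norm_num)
  have h6 := (tendsto_const_nhds (x := (1:ℝ))).sub hfrac
  have h7 : (1:ℝ) - 2/(0+1) = -1 := by norm_num
  rw [h7] at h6
  exact h6.congr (fun y => (bs_tanh_eq (Real.sqrt E * y)).symm)


/-- The mass of the bright soliton: for `E > 0` and `c ∈ ℝ`, the bright-soliton profile
`φ_{E,c}` satisfies `∫ φ_{E,c}² = 8 arctan √((√(c²+4E)+c)/(√(c²+4E)−c))`, and in particular
this quantity is at most `4π`. -/
theorem bright_soliton_mass (E c : ℝ) (hE : 0 < E) :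
    ∀ φ : ℝ → ℝ,
      (φ = fun y =>
        (2 * Real.sqrt (2 * E) / (c ^ 2 + 4 * E) ^ ((1 : ℝ) / 4)) *
          (1 / Real.sqrt (Real.cosh (2 * Real.sqrt E * y) - c / Real.sqrt (c ^ 2 + 4 * E)))) →
      (∫ y : ℝ, φ y ^ 2) =
          8 * Real.arctan
            (Real.sqrt ((Real.sqrt (c ^ 2 + 4 * E) + c) / (Real.sqrt (c ^ 2 + 4 * E) - c))) ∧
        (∫ y : ℝ, φ y ^ 2) ≤ 4 * Real.pi := by
  intro φ hφ
  set s := Real.sqrt (c^2 + 4*E) with hs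
  have hs2 : s^2 = c^2 + 4*E := Real.sq_sqrt (by nlinarith)
  have habs : |c| < s := by
    rw [← Real.sqrt_sq_eq_abs]
    exact Real.sqrt_lt_sqrt (sq_nonneg c) (by nlinarith)
  have hcs : c < s := (abs_lt.mp habs).2
  have hcs' : -s < c := (abs_lt.mp habs).1
  have hs0 : 0 < s := lt_of_le_of_lt (abs_nonneg c) habs
  set m := Real.sqrt ((s + c)/(s - c)) with hm
  have hm0 : 0 < m := Real.sqrt_pos.mpr (div_pos (by linarith) (by linarith))
  have hm2 : m^2 = (s+c)/(s-c) := Real.sq_sqrt (le_of_lt (div_pos (by linarith) (by linarith)))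
  have hscne : s - c ≠ 0 := ne_of_gt (by linarith)
  have hmE : m * Real.sqrt E = (s + c)/2 := by
    have h1 : (m * Real.sqrt E)^2 = ((s+c)/2)^2 := by
      rw [mul_pow, hm2, Real.sq_sqrt hE.le]
      field_simp
      linear_combination ((-1)*(s+c))*hs2
    have h2 : m * Real.sqrt E = Real.sqrt ((m * Real.sqrt E)^2) :=
      (Real.sqrt_sq (by positivity)).symm
    rw [h2, h1, Real.sqrt_sq (by linarith)]
  set g : ℝ → ℝ := fun y =>
    ((2 * Real.sqrt (2 * E) / (c ^ 2 + 4 * E) ^ ((1 : ℝ) / 4)) *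
      (1 / Real.sqrt (Real.cosh (2 * Real.sqrt E * y) - c / s))) ^ 2 / 4 with hg
  set F : ℝ → ℝ := fun y =>
    Real.arctan (m * (Real.sinh (Real.sqrt E * y) / Real.cosh (Real.sqrt E * y))) with hF
  have key : ∀ y, HasDerivAt F (g y) y := fun y =>
    bs_aux_deriv E c hE s hs2 hcs hcs' hs0 m hm0 hm2 hmE hscne y
  have hgnn : ∀ y, 0 ≤ g y := by
    intro y
    simp only [hg]
    positivity
  have hφg : ∀ y, φ y ^ 2 = 4 * g y := by
    intro y
    simp only [hφ, hg]
    ring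
  have hFtop : Tendsto F atTop (𝓝 (Real.arctan m)) := by
    have h1 := (bs_tanh_top E hE).const_mul m
    rw [mul_one] at h1
    exact (Real.continuous_arctan.tendsto m).comp h1
  have hFbot : Tendsto F atBot (𝓝 (Real.arctan (-m))) := by
    have h1 := (bs_tanh_bot E hE).const_mul m
    rw [mul_neg_one] at h1
    exact (Real.continuous_arctan.tendsto (-m)).comp h1
  have hIoi : IntegrableOn g (Set.Ioi 0) volume :=
    integrableOn_Ioi_deriv_of_nonneg' (fun x _ => key x) (fun x _ => hgnn x) hFtop
  have hIci : IntegrableOn g (Set.Ici 0) volume :=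
    (integrableOn_Ici_iff_integrableOn_Ioi (f := g) (b := 0) (μ := volume)).mpr hIoi
  have hgeven : ∀ x, g (-x) = g x := by
    intro x
    simp only [hg, mul_neg, Real.cosh_neg]
  have hIic : IntegrableOn g (Set.Iic 0) volume := by
    rw [← Measure.map_neg_eq_self (volume : Measure ℝ)]
    have hemb : MeasurableEmbedding (fun x : ℝ => -x) :=
      (Homeomorph.neg ℝ).measurableEmbedding
    rw [hemb.integrableOn_map_iff]
    simp_rw [Function.comp_def, hgeven, Set.neg_preimage, Set.neg_Iic, neg_zero]
    exact hIci
  have hgint : Integrable g := by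
    rw [← integrableOn_univ, ← Set.Iic_union_Ioi (a := (0:ℝ))]
    exact hIic.union hIoi
  have hInt : ∫ y, g y = Real.arctan m - Real.arctan (-m) :=
    integral_of_hasDerivAt_of_tendsto key hgint hFbot hFtop
  have h8 : (∫ y : ℝ, φ y ^ 2) = 8 * Real.arctan m := by
    simp only [hφg]
    rw [integral_const_mul, hInt, Real.arctan_neg]
    ring
  refine ⟨h8, ?_⟩
  rw [h8]
  have := Real.arctan_lt_pi_div_two m
  linarith
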